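/- Let E be a finite-dimensional real inner product space, K ⊆ E a nonempty closed convex set with metric projection Π_K, and h : E → ℝ a differentiable function whose gradient ∇h is L-Lipschitz and which is m-strongly convex with 0 < m ≤ L. Let μ* be the (unique) minimizer of h over K, let γ ∈ (0, 2/L), and set ε² := 1 − (2m²/L)γ + m²γ². Then for every μ ∈ K, the projected gradient update μ⁺ := Π_K(μ − γ∇h(μ)) satisfies ‖μ⁺ − μ*‖² ≤ ε² ‖μ − μ*‖². -/

import Mathlib

open Set Filter Topology RealInnerProductSpace

section aux
variable {E : Type*} [NormedAddCommGroup E] [InnerProductSpace ℝ E] [CompleteSpace E]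

private lemma line_hasDerivAt (h : E → ℝ) (hdiff : Differentiable ℝ h) (x d : E) (t : ℝ) :
    HasDerivAt (fun s : ℝ => h (x + s • d)) ⟪gradient h (x + t • d), d⟫ t := by
  have hline : HasDerivAt (fun s : ℝ => x + s • d) d t := by
    simpa using ((hasDerivAt_id t).smul_const d).const_add x
  have hg := (hdiff (x + t • d)).hasGradientAt.hasFDerivAt
  have := hg.comp_hasDerivAt t hline
  simpa [InnerProductSpace.toDual_apply_apply, Function.comp_def] using this

private lemma deriv_le_slope' (ψ : ℝ → ℝ) (D : ℝ) (hψ : HasDerivAt ψ D 0)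
    (hcv : ∀ t ∈ Set.Ioc (0:ℝ) 1, ψ t ≤ (1 - t) * ψ 0 + t * ψ 1) : D ≤ ψ 1 - ψ 0 := by
  have htend : Tendsto (slope ψ 0) (𝓝[>] 0) (𝓝 D) :=
    (hasDerivAt_iff_tendsto_slope.1 hψ).mono_left
      (nhdsWithin_mono _ fun x hx => ne_of_gt hx)
  refine le_of_tendsto htend ?_
  filter_upwards [Ioc_mem_nhdsGT_of_mem (by norm_num : (0:ℝ) ∈ Ico (0:ℝ) 1)] with t ht
  have ht0 : 0 < t := ht.1
  have := hcv t ht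
  rw [slope_def_field, sub_zero, div_le_iff₀ ht0]
  nlinarith

private lemma deriv_nonneg_of_min' (ψ : ℝ → ℝ) (D : ℝ) (hψ : HasDerivAt ψ D 0)
    (hmin : ∀ t ∈ Set.Ioc (0:ℝ) 1, ψ 0 ≤ ψ t) : 0 ≤ D := by
  have htend : Tendsto (slope ψ 0) (𝓝[>] 0) (𝓝 D) :=
    (hasDerivAt_iff_tendsto_slope.1 hψ).mono_left
      (nhdsWithin_mono _ fun x hx => ne_of_gt hx)
  refine ge_of_tendsto htend ?_
  filter_upwards [Ioc_mem_nhdsGT_of_mem (by norm_num : (0:ℝ) ∈ Ico (0:ℝ) 1)] with t ht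
  have ht0 : 0 < t := ht.1
  have := hmin t ht
  rw [slope_def_field, sub_zero]
  have := hmin t ht
  exact div_nonneg (by linarith) ht0.le

/-- strong convexity gradient inequality along a segment -/
private lemma sc_grad_ineq (h : E → ℝ) (hdiff : Differentiable ℝ h) (m : ℝ)
    (hsc : ConvexOn ℝ Set.univ (fun x : E => h x - m / 2 * ‖x‖ ^ 2)) (x y : E) :
    ⟪gradient h x, y - x⟫ - m * ⟪x, y - x⟫
      ≤ (h y - m / 2 * ‖y‖ ^ 2) - (h x - m / 2 * ‖x‖ ^ 2) := by
  set d := y - x with hd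
  have hnorm : ∀ t : ℝ, ‖x + t • d‖ ^ 2 = ‖x‖ ^ 2 + 2 * t * ⟪x, d⟫ + t ^ 2 * ‖d‖ ^ 2 := by
    intro t
    rw [norm_add_sq_real, real_inner_smul_right, norm_smul]
    rw [mul_pow, Real.norm_eq_abs, sq_abs]
    ring
  set ψ : ℝ → ℝ := fun t => h (x + t • d) - m / 2 * ‖x + t • d‖ ^ 2 with hψdef
  have hh := line_hasDerivAt h hdiff x d 0
  rw [zero_smul, add_zero] at hh
  have hq : HasDerivAt (fun t : ℝ => m / 2 * ‖x + t • d‖ ^ 2) (m * ⟪x, d⟫) 0 := by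
    have heq : (fun t : ℝ => m / 2 * ‖x + t • d‖ ^ 2)
        = fun t : ℝ => m / 2 * (‖x‖ ^ 2 + (2 * t * ⟪x, d⟫ + t ^ 2 * ‖d‖ ^ 2)) :=
      funext fun t => by rw [hnorm]; ring
    rw [heq]
    have h1 : HasDerivAt (fun t : ℝ => 2 * t * ⟪x, d⟫) (2 * ⟪x, d⟫) 0 := by
      simpa using (((hasDerivAt_id (0:ℝ)).const_mul 2).mul_const ⟪x, d⟫)
    have h2 : HasDerivAt (fun t : ℝ => t ^ 2 * ‖d‖ ^ 2) 0 0 := by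
      simpa using (hasDerivAt_pow 2 (0:ℝ)).mul_const (‖d‖ ^ 2)
    have h3 := (((h1.add h2).const_add (‖x‖ ^ 2)).const_mul (m / 2))
    exact h3.congr_deriv (by ring)
  have hψ : HasDerivAt ψ (⟪gradient h x, d⟫ - m * ⟪x, d⟫) 0 := hh.sub hq
  have hcv : ∀ t ∈ Set.Ioc (0:ℝ) 1, ψ t ≤ (1 - t) * ψ 0 + t * ψ 1 := by
    intro t ht
    have hconv := hsc.2 (Set.mem_univ x) (Set.mem_univ y)
      (by linarith [ht.2] : (0:ℝ) ≤ 1 - t) (le_of_lt ht.1) (by ring)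
    have hpt : x + t • d = (1 - t) • x + t • y := by
      rw [hd]; module
    have h0 : x + (0:ℝ) • d = x := by simp
    have h1 : x + (1:ℝ) • d = y := by rw [hd]; module
    simp only [hψdef, hpt, h0, h1]
    simpa [smul_eq_mul] using hconv
  have := deriv_le_slope' ψ _ hψ hcv
  have h0 : x + (0:ℝ) • d = x := by simp
  have h1 : x + (1:ℝ) • d = y := by rw [hd]; module
  simp only [hψdef, h0, h1] at this
  linarith

/-- descent lemma -/
private lemma descent (h : E → ℝ) (hdiff : Differentiable ℝ h) (L : ℝ) (hL : 0 < L)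
    (hLip : ∀ x y : E, ‖gradient h x - gradient h y‖ ≤ L * ‖x - y‖) (x d : E) :
    h (x + d) ≤ h x + ⟪gradient h x, d⟫ + L / 2 * ‖d‖ ^ 2 := by
  set ψ : ℝ → ℝ := fun t => h (x + t • d) - t * ⟪gradient h x, d⟫ - L * t ^ 2 / 2 * ‖d‖ ^ 2
    with hψdef
  have hder : ∀ t : ℝ, HasDerivAt ψ
      (⟪gradient h (x + t • d) - gradient h x, d⟫ - L * t * ‖d‖ ^ 2) t := by
    intro t
    have h1 := line_hasDerivAt h hdiff x d t
    have h2 : HasDerivAt (fun s : ℝ => s * ⟪gradient h x, d⟫) ⟪gradient h x, d⟫ t := by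
      simpa using (hasDerivAt_id t).mul_const ⟪gradient h x, d⟫
    have h3 : HasDerivAt (fun s : ℝ => L * s ^ 2 / 2 * ‖d‖ ^ 2) (L * t * ‖d‖ ^ 2) t := by
      have h4 := (((hasDerivAt_pow 2 t).const_mul L).div_const 2).mul_const (‖d‖ ^ 2)
      exact h4.congr_deriv (by ring)
    have h5 := (h1.sub h2).sub h3
    exact h5.congr_deriv (by rw [inner_sub_left])
  have hanti : AntitoneOn ψ (Icc 0 1) := by
    apply antitoneOn_of_deriv_nonpos (convex_Icc 0 1)
    · exact fun t _ => ((hder t).differentiableAt.continuousAt).continuousWithinAt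
    · exact fun t _ => (hder t).differentiableAt.differentiableWithinAt
    · intro t ht
      rw [interior_Icc] at ht
      rw [(hder t).deriv]
      have ht0 : 0 < t := ht.1
      have hb : ⟪gradient h (x + t • d) - gradient h x, d⟫
          ≤ ‖gradient h (x + t • d) - gradient h x‖ * ‖d‖ := real_inner_le_norm _ _
      have hL2 : ‖gradient h (x + t • d) - gradient h x‖ ≤ L * (t * ‖d‖) := by
        have h6 := hLip (x + t • d) x
        rw [add_sub_cancel_left, norm_smul, Real.norm_eq_abs, abs_of_pos ht0] at h6
        exact h6
      nlinarith [norm_nonneg d, norm_nonneg (gradient h (x + t • d) - gradient h x)]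
  have h01 := hanti (by constructor <;> norm_num) (by constructor <;> norm_num)
    (by norm_num : (0:ℝ) ≤ 1)
  simp only [hψdef, one_smul, zero_smul, add_zero, one_pow, one_mul, zero_mul,
    zero_pow, mul_zero, zero_div, sub_zero] at h01
  nlinarith [h01]

/-- convexity gradient inequality (from strong convexity) -/
private lemma grad_ineq (h : E → ℝ) (hdiff : Differentiable ℝ h) (m : ℝ) (hm : 0 < m)
    (hsc : ConvexOn ℝ Set.univ (fun x : E => h x - m / 2 * ‖x‖ ^ 2)) (x y : E) :
    h x + ⟪gradient h x, y - x⟫ ≤ h y := by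
  have h1 := sc_grad_ineq h hdiff m hsc x y
  have hns : ‖y - x‖ ^ 2 = ‖y‖ ^ 2 - 2 * ⟪y, x⟫ + ‖x‖ ^ 2 := norm_sub_sq_real y x
  have hxy : ⟪x, y - x⟫ = ⟪x, y⟫ - ‖x‖ ^ 2 := by
    rw [inner_sub_right, real_inner_self_eq_norm_sq]
  have hcm := real_inner_comm y x
  nlinarith [mul_nonneg hm.le (sq_nonneg ‖y - x‖)]

/-- strong monotonicity of the gradient -/
private lemma strong_mono (h : E → ℝ) (hdiff : Differentiable ℝ h) (m : ℝ)
    (hsc : ConvexOn ℝ Set.univ (fun x : E => h x - m / 2 * ‖x‖ ^ 2)) (x y : E) :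
    m * ‖y - x‖ ^ 2 ≤ ⟪gradient h y - gradient h x, y - x⟫ := by
  have h1 := sc_grad_ineq h hdiff m hsc x y
  have h2 := sc_grad_ineq h hdiff m hsc y x
  have e1 : x - y = -(y - x) := by abel
  rw [e1, inner_neg_right, inner_neg_right] at h2
  rw [inner_sub_left]
  have hxy : ⟪y, y - x⟫ - ⟪x, y - x⟫ = ‖y - x‖ ^ 2 := by
    rw [← inner_sub_left, real_inner_self_eq_norm_sq]
  have hxy' : m * ⟪y, y - x⟫ - m * ⟪x, y - x⟫ = m * ‖y - x‖ ^ 2 := by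
    rw [← mul_sub, hxy]
  linarith

/-- one-sided cocoercivity inequality -/
private lemma one_sided (h : E → ℝ) (hdiff : Differentiable ℝ h) (L m : ℝ) (hm : 0 < m)
    (hmL : m ≤ L)
    (hLip : ∀ x y : E, ‖gradient h x - gradient h y‖ ≤ L * ‖x - y‖)
    (hsc : ConvexOn ℝ Set.univ (fun x : E => h x - m / 2 * ‖x‖ ^ 2)) (x y : E) :
    h x + ⟪gradient h x, y - x⟫ + 1 / (2 * L) * ‖gradient h y - gradient h x‖ ^ 2 ≤ h y := by
  have hL : 0 < L := lt_of_lt_of_le hm hmL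
  set c := gradient h x with hc
  set gg := gradient h y - c with hgg
  have hA := grad_ineq h hdiff m hm hsc x (y + (-(1 / L)) • gg)
  have hB := descent h hdiff L hL hLip y ((-(1 / L)) • gg)
  have e1 : ⟪c, y + (-(1 / L)) • gg - x⟫ = ⟪c, y - x⟫ + (-(1 / L)) * ⟪c, gg⟫ := by
    have e0 : y + (-(1 / L)) • gg - x = (y - x) + (-(1 / L)) • gg := by abel
    rw [e0, inner_add_right, real_inner_smul_right]
  have e2 : ⟪gradient h y, (-(1 / L)) • gg⟫ = (-(1 / L)) * ⟪gradient h y, gg⟫ :=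
    real_inner_smul_right _ _ _
  have e3 : ‖(-(1 / L)) • gg‖ ^ 2 = (1 / L) ^ 2 * ‖gg‖ ^ 2 := by
    rw [norm_smul, mul_pow, Real.norm_eq_abs, sq_abs]
    ring
  rw [e1] at hA
  rw [e2, e3] at hB
  have e4 : ⟪gradient h y, gg⟫ - ⟪c, gg⟫ = ‖gg‖ ^ 2 := by
    rw [← inner_sub_left, ← hgg, real_inner_self_eq_norm_sq]
  have e4' : (1 / L) * ⟪gradient h y, gg⟫ - (1 / L) * ⟪c, gg⟫ = (1 / L) * ‖gg‖ ^ 2 := by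
    rw [← mul_sub, e4]
  have hid : (1 / L) * ‖gg‖ ^ 2 - L / 2 * ((1 / L) ^ 2 * ‖gg‖ ^ 2)
      = 1 / (2 * L) * ‖gg‖ ^ 2 := by
    field_simp
    ring
  linarith [le_trans hA hB]

/-- cocoercivity of the gradient -/
private lemma coco_lemma (h : E → ℝ) (hdiff : Differentiable ℝ h) (L m : ℝ) (hm : 0 < m)
    (hmL : m ≤ L)
    (hLip : ∀ x y : E, ‖gradient h x - gradient h y‖ ≤ L * ‖x - y‖)
    (hsc : ConvexOn ℝ Set.univ (fun x : E => h x - m / 2 * ‖x‖ ^ 2)) (x y : E) :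
    (1 / L) * ‖gradient h y - gradient h x‖ ^ 2 ≤ ⟪gradient h y - gradient h x, y - x⟫ := by
  have hL : 0 < L := lt_of_lt_of_le hm hmL
  have h3 := one_sided h hdiff L m hm hmL hLip hsc x y
  have h4 := one_sided h hdiff L m hm hmL hLip hsc y x
  have e5 : x - y = -(y - x) := by abel
  rw [e5, inner_neg_right] at h4
  have e6 : ‖gradient h x - gradient h y‖ = ‖gradient h y - gradient h x‖ := norm_sub_rev _ _
  rw [e6] at h4
  have hid2 : 1 / (2 * L) * ‖gradient h y - gradient h x‖ ^ 2
      + 1 / (2 * L) * ‖gradient h y - gradient h x‖ ^ 2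
      = (1 / L) * ‖gradient h y - gradient h x‖ ^ 2 := by
    field_simp
    ring
  rw [inner_sub_left]
  linarith

private lemma projVI (K : Set E) (hKne : K.Nonempty) (hKcv : Convex ℝ K) (proj : E → E)
    (hproj : ∀ y : E, proj y ∈ K ∧ ∀ z ∈ K, ‖y - proj y‖ ≤ ‖y - z‖) :
    ∀ y : E, ∀ w ∈ K, ⟪y - proj y, w - proj y⟫ ≤ 0 := by
  haveI : Nonempty K := hKne.to_subtype
  intro y
  have hproj_inf : ‖y - proj y‖ = ⨅ w : K, ‖y - (w : E)‖ := by
    refine le_antisymm (le_ciInf fun w => (hproj y).2 w w.2) ?_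
    have hbdd : BddBelow (Set.range fun w : K => ‖y - (w : E)‖) := by
      refine ⟨0, ?_⟩
      rintro _ ⟨w, rfl⟩
      exact norm_nonneg _
    exact ciInf_le hbdd ⟨proj y, (hproj y).1⟩
  exact (norm_eq_iInf_iff_real_inner_le_zero hKcv (hproj y).1).1 hproj_inf

private lemma opt_lemma (h : E → ℝ) (hdiff : Differentiable ℝ h) (K : Set E)
    (hKcv : Convex ℝ K) (μs : E) (hμsK : μs ∈ K) (hμsmin : ∀ z ∈ K, h μs ≤ h z) :
    ∀ z ∈ K, 0 ≤ ⟪gradient h μs, z - μs⟫ := by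
  intro z hz
  have hder := line_hasDerivAt h hdiff μs (z - μs) 0
  rw [zero_smul, add_zero] at hder
  refine deriv_nonneg_of_min' _ _ hder ?_
  intro t ht
  have hmem : μs + t • (z - μs) ∈ K := by
    have hcm := hKcv hμsK hz (by linarith [ht.2] : (0:ℝ) ≤ 1 - t) ht.1.le (by ring)
    have e : μs + t • (z - μs) = (1 - t) • μs + t • z := by module
    rw [e]; exact hcm
  have := hμsmin _ hmem
  simpa using this

private lemma sq_norm_ineq (m nd ng A : ℝ) (hm : 0 < m) (hnd : 0 ≤ nd) (hng : 0 ≤ ng)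
    (h1 : m * nd ^ 2 ≤ A) (h2 : A ≤ ng * nd) : m ^ 2 * nd ^ 2 ≤ ng ^ 2 := by
  rcases eq_or_lt_of_le hnd with h0 | h0
  · rw [← h0]
    nlinarith
  · have hstep : m * nd ≤ ng := by
      refine le_of_mul_le_mul_right ?_ h0
      nlinarith
    nlinarith

private lemma final_arith (L m γ D G A : ℝ) (hm : 0 < m) (hmL : m ≤ L) (hγ : 0 < γ)
    (hγL : γ < 2 / L) (hcoco : (1 / L) * G ≤ A) (hGm : m ^ 2 * D ≤ G) (hD : 0 ≤ D) :
    D - 2 * γ * A + γ ^ 2 * G ≤ (1 - 2 * m ^ 2 / L * γ + m ^ 2 * γ ^ 2) * D := by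
  have hL : 0 < L := lt_of_lt_of_le hm hmL
  have s1 : 2 * γ * ((1 / L) * G) ≤ 2 * γ * A :=
    mul_le_mul_of_nonneg_left hcoco (by linarith)
  have s2 : γ ^ 2 - 2 * γ * (1 / L) ≤ 0 := by
    have h9 : γ ≤ 2 * (1 / L) := by rw [mul_one_div]; exact hγL.le
    nlinarith [mul_le_mul_of_nonneg_left h9 hγ.le]
  have s3 : (γ ^ 2 - 2 * γ * (1 / L)) * G ≤ (γ ^ 2 - 2 * γ * (1 / L)) * (m ^ 2 * D) :=
    mul_le_mul_of_nonpos_left hGm s2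
  have e1 : 2 * γ * ((1 / L) * G) = 2 * γ * (1 / L) * G := by ring
  have e2 : (γ ^ 2 - 2 * γ * (1 / L)) * G = γ ^ 2 * G - 2 * γ * (1 / L) * G := by ring
  have e3 : (γ ^ 2 - 2 * γ * (1 / L)) * (m ^ 2 * D)
      = m ^ 2 * γ ^ 2 * D - 2 * m ^ 2 / L * γ * D := by ring
  have e4 : (1 - 2 * m ^ 2 / L * γ + m ^ 2 * γ ^ 2) * D
      = D - 2 * m ^ 2 / L * γ * D + m ^ 2 * γ ^ 2 * D := by ring
  linarith

end aux



/-- **Projected gradient contraction (Theorem 4(i)).**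
Let `E` be a finite-dimensional real inner product space, `K ⊆ E` a nonempty closed
convex set with metric projection `proj`, and `h : E → ℝ` differentiable with
`L`-Lipschitz gradient and `m`-strongly convex (`0 < m ≤ L`).  If `μs` minimizes `h`
over `K` and `γ ∈ (0, 2/L)`, then with `ε² = 1 - (2m²/L)γ + m²γ²`, for every `μ ∈ K`
the update `μ⁺ = proj (μ - γ∇h(μ))` satisfies `‖μ⁺ - μs‖² ≤ ε² ‖μ - μs‖²`. -/
theorem stmt0
    {E : Type*} [NormedAddCommGroup E] [InnerProductSpace ℝ E] [FiniteDimensional ℝ E]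
    (K : Set E) (hKne : K.Nonempty) (hKcl : IsClosed K) (hKcv : Convex ℝ K)
    (proj : E → E)
    (hproj : ∀ y : E, proj y ∈ K ∧ ∀ z ∈ K, ‖y - proj y‖ ≤ ‖y - z‖)
    (h : E → ℝ) (hdiff : Differentiable ℝ h)
    (L m : ℝ) (hm : 0 < m) (hmL : m ≤ L)
    (hLip : ∀ x y : E, ‖gradient h x - gradient h y‖ ≤ L * ‖x - y‖)
    (hsc : ConvexOn ℝ Set.univ (fun x : E => h x - m / 2 * ‖x‖ ^ 2))
    (μs : E) (hμsK : μs ∈ K) (hμsmin : ∀ z ∈ K, h μs ≤ h z)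
    (hμsuniq : ∀ z ∈ K, (∀ w ∈ K, h z ≤ h w) → z = μs)
    (γ : ℝ) (hγ : 0 < γ) (hγL : γ < 2 / L)
    (μ : E) (hμK : μ ∈ K) :
    ‖proj (μ - γ • gradient h μ) - μs‖ ^ 2 ≤
      (1 - 2 * m ^ 2 / L * γ + m ^ 2 * γ ^ 2) * ‖μ - μs‖ ^ 2 := by
  have hL : 0 < L := lt_of_lt_of_le hm hmL
  have hVI := projVI K hKne hKcv proj hproj
  have hopt := opt_lemma h hdiff K hKcv μs hμsK hμsmin
  set u := μ - γ • gradient h μ with hu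
  set v := μs - γ • gradient h μs with hv
  set p := proj u with hp
  set g := gradient h μ - gradient h μs with hg
  set d := μ - μs with hdd
  have hpK : p ∈ K := (hproj u).1
  have h1 : ⟪u - p, μs - p⟫ ≤ 0 := by rw [hp]; exact hVI u μs hμsK
  clear_value u v p g d
  have h2 : ⟪v - μs, p - μs⟫ ≤ 0 := by
    have e : v - μs = -(γ • gradient h μs) := by rw [hv]; abel
    rw [e, inner_neg_left, real_inner_smul_left]
    have := hopt p hpK
    nlinarith
  have hkey : ‖p - μs‖ ^ 2 ≤ ⟪u - v, p - μs⟫ := by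
    have hsplit : ⟪p - μs, p - μs⟫
        = ⟪p - u, p - μs⟫ + ⟪u - v, p - μs⟫ + ⟪v - μs, p - μs⟫ := by
      rw [← inner_add_left, ← inner_add_left]
      congr 1
      abel
    have h1' : ⟪p - u, p - μs⟫ ≤ 0 := by
      have e : (⟪p - u, p - μs⟫ : ℝ) = ⟪u - p, μs - p⟫ := by
        rw [← inner_neg_neg]
        congr 1 <;> abel
      rw [e]; exact h1
    have hsq := real_inner_self_eq_norm_sq (p - μs)
    linarith
  have hCSp : ⟪u - v, p - μs⟫ ≤ ‖u - v‖ * ‖p - μs‖ := real_inner_le_norm _ _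
  have hab : ‖p - μs‖ ^ 2 ≤ ‖u - v‖ ^ 2 := by
    nlinarith [norm_nonneg (p - μs), norm_nonneg (u - v), sq_nonneg (‖p - μs‖ - ‖u - v‖)]
  have huv : u - v = d - γ • g := by rw [hu, hv, hg, hdd]; module
  have hexp : ‖u - v‖ ^ 2 = ‖d‖ ^ 2 - 2 * γ * ⟪g, d⟫ + γ ^ 2 * ‖g‖ ^ 2 := by
    rw [huv, norm_sub_sq_real, real_inner_smul_right, norm_smul, mul_pow,
      Real.norm_eq_abs, sq_abs, real_inner_comm]
    ring
  have hmono : m * ‖d‖ ^ 2 ≤ ⟪g, d⟫ := by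
    have := strong_mono h hdiff m hsc μs μ
    rw [← hg, ← hdd] at this
    exact this
  have hcoco : (1 / L) * ‖g‖ ^ 2 ≤ ⟪g, d⟫ := by
    have := coco_lemma h hdiff L m hm hmL hLip hsc μs μ
    rw [← hg, ← hdd] at this
    exact this
  have hCS : ⟪g, d⟫ ≤ ‖g‖ * ‖d‖ := real_inner_le_norm _ _
  have hGm : m ^ 2 * ‖d‖ ^ 2 ≤ ‖g‖ ^ 2 :=
    sq_norm_ineq m ‖d‖ ‖g‖ ⟪g, d⟫ hm (norm_nonneg d) (norm_nonneg g) hmono hCS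
  have hfin := final_arith L m γ (‖d‖ ^ 2) (‖g‖ ^ 2) ⟪g, d⟫ hm hmL hγ hγL hcoco hGm
    (sq_nonneg ‖d‖)
  linarith
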